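/- Assume ν = 2κλ/θ² > 1/2 and let p > 0 satisfy p ≤ 2κ/θ². Then for every partition 0 = t₀ < ⋯ < t_N = T one has sup_{t∈[0,T]} E[ exp(p v̂_t) ] ≤ exp(p v₀) · exp(κλ p T); in particular this bound is independent of the partition. -/

import Mathlib

set_option linter.unusedSectionVars false
set_option maxHeartbeats 1000000

open MeasureTheory ProbabilityTheory
open scoped ENNReal NNReal

noncomputable section

variable {Ω : Type*} [MeasurableSpace Ω]

/-- A standard Brownian motion (indexed by all of `ℝ`; only nonnegative times matter):
it starts at `0`, has Gaussian increments with the correct variance, and has independent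
increments. -/
structure IsBrownian (P : Measure Ω) (W : ℝ → Ω → ℝ) : Prop where
  meas : ∀ s : ℝ, Measurable (W s)
  start : ∀ ω, W 0 ω = 0
  gauss : ∀ s t : ℝ, 0 ≤ s → s ≤ t →
    Measure.map (fun ω => W t ω - W s ω) P = gaussianReal 0 (Real.toNNReal (t - s))
  indep : ∀ u : ℕ → ℝ, Monotone u →
    iIndepFun (fun k ω => W (u (k + 1)) ω - W (u k) ω) P

/-- A partition `0 = t₀ < t₁ < ⋯ < t_N = T` of `[0, T]`. -/
structure IsPartition (t : ℕ → ℝ) (N : ℕ) (T : ℝ) : Prop where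
  zero : t 0 = 0
  last : t N = T
  lt : ∀ k < N, t k < t (k + 1)

/-- The mesh `Δ = max_{1 ≤ k ≤ N} (t_k - t_{k-1})` of a partition. -/
def mesh (t : ℕ → ℝ) (N : ℕ) : ℝ := ⨆ k ∈ Finset.range N, (t (k + 1) - t k)

/-- The drift-implicit Milstein scheme `v_n` for the CIR process (closed form). -/
def milstein (κ lam θ v₀ : ℝ) (t : ℕ → ℝ) (W : ℝ → Ω → ℝ) : ℕ → Ω → ℝ
  | 0 => fun _ => v₀
  | n + 1 => fun ω =>
      (1 / (1 + κ * (t (n + 1) - t n))) *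
        ((Real.sqrt (milstein κ lam θ v₀ t W n ω)
            + (θ / 2) * (W (t (n + 1)) ω - W (t n) ω)) ^ 2
          + (κ * lam - θ ^ 2 / 4) * (t (n + 1) - t n))

/-- `n(s)`: the index of the largest partition point `≤ s`. -/
def nIdx (t : ℕ → ℝ) (N : ℕ) (s : ℝ) : ℕ := Nat.findGreatest (fun n => t n ≤ s) N

/-- `η(s)`: the largest partition point `≤ s`. -/
def eta (t : ℕ → ℝ) (N : ℕ) (s : ℝ) : ℝ := t (nIdx t N s)

/-- `ṽ_s`: the interpolation of the Milstein scheme before the implicit-drift division. -/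
def tildeV (κ lam θ v₀ : ℝ) (t : ℕ → ℝ) (N : ℕ) (W : ℝ → Ω → ℝ) (s : ℝ) (ω : Ω) : ℝ :=
  milstein κ lam θ v₀ t W (nIdx t N s) ω + κ * lam * (s - eta t N s)
    + θ * Real.sqrt (milstein κ lam θ v₀ t W (nIdx t N s) ω) * (W s ω - W (eta t N s) ω)
    + (θ ^ 2 / 4) * ((W s ω - W (eta t N s) ω) ^ 2 - (s - eta t N s))

/-- `v̂_s`: the continuous-time interpolation of the Milstein scheme. -/
def hatV (κ lam θ v₀ : ℝ) (t : ℕ → ℝ) (N : ℕ) (W : ℝ → Ω → ℝ) (s : ℝ) (ω : Ω) : ℝ :=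
  tildeV κ lam θ v₀ t N W s ω / (1 + κ * (s - eta t N s))

/-! ### Auxiliary lemmas -/

open Real

lemma IsPartition.mono' {t : ℕ → ℝ} {N : ℕ} {T : ℝ} (h : IsPartition t N T) :
    ∀ {k l : ℕ}, k ≤ l → l ≤ N → t k ≤ t l := by
  intro k l hkl hlN
  induction l with
  | zero => obtain rfl : k = 0 := Nat.le_zero.mp hkl; exact le_rfl
  | succ m ih =>
    rcases Nat.eq_or_lt_of_le hkl with rfl | hlt
    · exact le_rfl
    · exact le_trans (ih (by omega) (by omega)) (h.lt m (by omega)).le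

lemma IsPartition.nonneg' {t : ℕ → ℝ} {N : ℕ} {T : ℝ} (h : IsPartition t N T)
    {k : ℕ} (hk : k ≤ N) : 0 ≤ t k := h.zero ▸ h.mono' (Nat.zero_le k) hk

/-- The Milstein scheme as a (measurable) function of the Brownian increments. -/
def milsteinFun (κ lam θ v₀ : ℝ) (t : ℕ → ℝ) : ℕ → (ℕ → ℝ) → ℝ
  | 0 => fun _ => v₀
  | n + 1 => fun x =>
      (1 / (1 + κ * (t (n + 1) - t n))) *
        ((Real.sqrt (milsteinFun κ lam θ v₀ t n x) + (θ / 2) * x n) ^ 2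
          + (κ * lam - θ ^ 2 / 4) * (t (n + 1) - t n))

lemma milstein_eq_fun (κ lam θ v₀ : ℝ) (t : ℕ → ℝ) (W : ℝ → Ω → ℝ) (n : ℕ) (ω : Ω) :
    milstein κ lam θ v₀ t W n ω
      = milsteinFun κ lam θ v₀ t n (fun k => W (t (k + 1)) ω - W (t k) ω) := by
  induction n with
  | zero => rfl
  | succ m ih => simp only [milstein, milsteinFun, ih]

lemma milsteinFun_measurable (κ lam θ v₀ : ℝ) (t : ℕ → ℝ) (n : ℕ) :
    Measurable (milsteinFun κ lam θ v₀ t n) := by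
  induction n with
  | zero => exact measurable_const
  | succ m ih =>
    simp only [milsteinFun]
    exact measurable_const.mul
      (((Real.continuous_sqrt.measurable.comp ih).add
        ((measurable_pi_apply m).const_mul _)).pow_const 2 |>.add measurable_const)

lemma milsteinFun_congr (κ lam θ v₀ : ℝ) (t : ℕ → ℝ) :
    ∀ (n : ℕ) (x y : ℕ → ℝ), (∀ k < n, x k = y k) →
      milsteinFun κ lam θ v₀ t n x = milsteinFun κ lam θ v₀ t n y := by
  intro n
  induction n with
  | zero => intro x y _; rfl
  | succ m ih =>
    intro x y h
    simp only [milsteinFun, ih x y (fun k hk => h k (by omega)), h m (by omega)]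

lemma milstein_measurable {W : ℝ → Ω → ℝ} (hW : ∀ s, Measurable (W s))
    (κ lam θ v₀ : ℝ) (t : ℕ → ℝ) (n : ℕ) :
    Measurable (milstein κ lam θ v₀ t W n) := by
  have h : milstein κ lam θ v₀ t W n
      = fun ω => milsteinFun κ lam θ v₀ t n (fun k => W (t (k + 1)) ω - W (t k) ω) :=
    funext (milstein_eq_fun κ lam θ v₀ t W n)
  rw [h]
  exact (milsteinFun_measurable κ lam θ v₀ t n).comp
    (measurable_pi_lambda _ fun k => (hW _).sub (hW _))

lemma milstein_nonneg {κ lam θ v₀ : ℝ} {t : ℕ → ℝ} {N : ℕ} {T : ℝ}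
    (hpart : IsPartition t N T) (hκ : 0 < κ) (hfell : θ ^ 2 / 4 ≤ κ * lam)
    (hv₀ : 0 ≤ v₀) (W : ℝ → Ω → ℝ) :
    ∀ n, n ≤ N → ∀ ω, 0 ≤ milstein κ lam θ v₀ t W n ω := by
  intro n
  induction n with
  | zero => intro _ ω; exact hv₀
  | succ m _ =>
    intro hm ω
    have hΔ : 0 < t (m + 1) - t m := sub_pos.mpr (hpart.lt m (by omega))
    have h1 : 0 < 1 + κ * (t (m + 1) - t m) := by positivity
    simp only [milstein]
    exact mul_nonneg (by positivity)
      (add_nonneg (sq_nonneg _) (mul_nonneg (sub_nonneg.mpr hfell) hΔ.le))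

lemma milstein_indepFun {P : Measure Ω} {W : ℝ → Ω → ℝ} (hW : IsBrownian P W)
    {t : ℕ → ℝ} {N : ℕ} {T : ℝ} (hpart : IsPartition t N T)
    (κ lam θ v₀ : ℝ) {n : ℕ} {s : ℝ} (hn : n ≤ N) (hs : t n ≤ s) :
    IndepFun (milstein κ lam θ v₀ t W n) (fun ω => W s ω - W (t n) ω) P := by
  classical
  set u : ℕ → ℝ := fun k => if k ≤ n then t k else s with hu
  have humono : Monotone u := by
    intro a b hab
    by_cases hb : b ≤ n
    · have ha : a ≤ n := le_trans hab hb
      simp only [hu, if_pos ha, if_pos hb]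
      exact hpart.mono' hab (le_trans hb hn)
    · by_cases ha : a ≤ n
      · simp only [hu, if_pos ha, if_neg hb]
        exact le_trans (hpart.mono' ha hn) hs
      · simp only [hu, if_neg ha, if_neg hb, le_refl]
  set f : ℕ → Ω → ℝ := fun k ω => W (u (k + 1)) ω - W (u k) ω with hf
  have hfmeas : ∀ k, Measurable (f k) := fun k => (hW.meas _).sub (hW.meas _)
  have hindep := hW.indep u humono
  have hdisj : Disjoint (Finset.range n) ({n} : Finset ℕ) := by simp
  have h2 := hindep.indepFun_finset (Finset.range n) {n} hdisj hfmeas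
  set φ : ({x // x ∈ Finset.range n} → ℝ) → ℝ := fun v =>
    milsteinFun κ lam θ v₀ t n
      (fun k => if h : k ∈ Finset.range n then v ⟨k, h⟩ else 0) with hφdef
  have hφ : Measurable φ := by
    apply (milsteinFun_measurable κ lam θ v₀ t n).comp
    apply measurable_pi_lambda
    intro k
    by_cases h : k ∈ Finset.range n
    · simpa only [dif_pos h] using
        measurable_pi_apply (⟨k, h⟩ : {x // x ∈ Finset.range n})
    · simpa only [dif_neg h] using measurable_const
  set ψ : (({n} : Finset ℕ) → ℝ) → ℝ := fun v => v ⟨n, Finset.mem_singleton_self n⟩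
    with hψdef
  have hψ : Measurable ψ := measurable_pi_apply _
  have h3 := h2.comp hφ hψ
  have e1 : φ ∘ (fun a (i : {x // x ∈ Finset.range n}) => f i a)
      = milstein κ lam θ v₀ t W n := by
    funext ω
    show φ (fun i : {x // x ∈ Finset.range n} => f i ω) = _
    rw [milstein_eq_fun, hφdef]
    apply milsteinFun_congr
    intro k hk
    have hk' : k ∈ Finset.range n := Finset.mem_range.mpr hk
    simp only [dif_pos hk']
    have e2 : u k = t k := if_pos (by omega)
    have e3 : u (k + 1) = t (k + 1) := if_pos (by omega)
    simp only [hf, e2, e3]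
  have e4 : ψ ∘ (fun a (i : {x // x ∈ ({n} : Finset ℕ)}) => f i a)
      = fun ω => W s ω - W (t n) ω := by
    funext ω
    show f n ω = _
    have e5 : u n = t n := if_pos le_rfl
    have e6 : u (n + 1) = s := if_neg (by omega)
    simp only [hf, e5, e6]
  rw [e1, e4] at h3
  exact h3

lemma complete_square (β γ δ g : ℝ) (hβ : β ≠ 0) :
    -β * g ^ 2 + γ * g + δ
      = -β * (g - γ / (2 * β)) ^ 2 + (δ + γ ^ 2 / (4 * β)) := by
  field_simp
  ring

lemma exp_arg_collect (p c b e D Δ g : ℝ) (hΔ : Δ ≠ 0) (hD : D ≠ 0) :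
    -(g - 0) ^ 2 / (2 * Δ) + p * (((c + b * g) ^ 2 + e) / D)
      = -(1 / (2 * Δ) - p * b ^ 2 / D) * g ^ 2 + (2 * p * b * c / D) * g
          + (p * c ^ 2 / D + p * e / D) := by
  field_simp
  ring

lemma gauss_core {κ lam θ p : ℝ} (hκ : 0 < κ) (hθ : 0 < θ)
    (hfell : θ ^ 2 / 4 ≤ κ * lam) (hp : 0 < p) (hpκ : p ≤ 2 * κ / θ ^ 2)
    {v Δ : ℝ} (hv : 0 ≤ v) (hΔ : 0 ≤ Δ) :
    ∫⁻ g, ENNReal.ofReal (Real.exp (p * (((Real.sqrt v + θ / 2 * g) ^ 2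
        + (κ * lam - θ ^ 2 / 4) * Δ) / (1 + κ * Δ)))) ∂(gaussianReal 0 Δ.toNNReal)
      ≤ ENNReal.ofReal (Real.exp (κ * lam * p * Δ) * Real.exp (p * v)) := by
  rcases hΔ.eq_or_lt with heq | hΔ0
  · rw [← heq]
    simp only [Real.toNNReal_zero, gaussianReal_zero_var, lintegral_dirac, mul_zero,
      add_zero, mul_one, Real.sq_sqrt hv, exp_zero, one_mul]
    simp [Real.sq_sqrt hv]
  · have hD : (0:ℝ) < 1 + κ * Δ := by positivity
    have hπ := Real.pi_pos
    set D := 1 + κ * Δ with hDdef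
    clear_value D
    have hpθ : p * θ ^ 2 ≤ 2 * κ := (le_div_iff₀ (by positivity)).mp hpκ
    set c := Real.sqrt v with hc
    have hc2 : c ^ 2 = v := by rw [hc]; exact Real.sq_sqrt hv
    have hc0 : 0 ≤ c := by rw [hc]; exact Real.sqrt_nonneg v
    clear_value c
    set β : ℝ := 1 / (2 * Δ) - p * (θ / 2) ^ 2 / D with hβdef
    clear_value β
    set x : ℝ := p * θ ^ 2 * Δ / (2 * D) with hxdef
    clear_value x
    have h2Δβ : 2 * Δ * β = 1 - x := by
      rw [hβdef, hxdef]; field_simp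
    have hx0 : 0 < x := by rw [hxdef]; positivity
    have hDx : D * (1 - x) = D - p * θ ^ 2 * Δ / 2 := by
      rw [hxdef]; field_simp
    have hD1x : 1 ≤ D * (1 - x) := by
      rw [hDx, hDdef]; nlinarith [mul_nonneg (mul_nonneg hp.le (sq_nonneg θ)) hΔ0.le]
    have h1x : 0 < 1 - x := by nlinarith
    have hβ : 0 < β := by nlinarith
    have hβeq : β = (1 - x) / (2 * Δ) := by
      rw [eq_div_iff (by positivity : (2:ℝ) * Δ ≠ 0)]; linarith [h2Δβ]
    set e : ℝ := (κ * lam - θ ^ 2 / 4) * Δ with he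
    clear_value e
    set γ : ℝ := 2 * p * (θ / 2) * c / D with hγ
    clear_value γ
    set δ : ℝ := p * c ^ 2 / D + p * e / D with hδ
    clear_value δ
    set m : ℝ := γ / (2 * β) with hm
    clear_value m
    set K : ℝ := δ + γ ^ 2 / (4 * β) with hK
    clear_value K
    have hV0 : Δ.toNNReal ≠ 0 := (Real.toNNReal_pos.mpr hΔ0).ne'
    have hVΔ : ((Δ.toNNReal : ℝ≥0) : ℝ) = Δ := Real.coe_toNNReal Δ hΔ0.le
    have hexparg : ∀ g : ℝ, -(g - 0) ^ 2 / (2 * Δ) + p * (((c + θ / 2 * g) ^ 2 + e) / D)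
        = K + -β * (g - m) ^ 2 := by
      intro g
      rw [exp_arg_collect p c (θ / 2) e D Δ g hΔ0.ne' hD.ne']
      rw [show 2 * p * (θ / 2) * c / D * g = γ * g by rw [hγ],
        show p * c ^ 2 / D + p * e / D = δ from hδ.symm, ← hβdef]
      rw [complete_square β γ δ g hβ.ne', ← hm, ← hK]
      ring
    have hpoint : ∀ g : ℝ,
        gaussianPDFReal 0 Δ.toNNReal g
            * Real.exp (p * (((c + θ / 2 * g) ^ 2 + e) / D))
          = (Real.sqrt (2 * π * Δ))⁻¹ * Real.exp K * Real.exp (-β * (g - m) ^ 2) := by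
      intro g
      calc gaussianPDFReal 0 Δ.toNNReal g * Real.exp (p * (((c + θ / 2 * g) ^ 2 + e) / D))
          = (Real.sqrt (2 * π * Δ))⁻¹
              * Real.exp (-(g - 0) ^ 2 / (2 * Δ) + p * (((c + θ / 2 * g) ^ 2 + e) / D)) := by
            rw [gaussianPDFReal, hVΔ, Real.exp_add]; ring
        _ = (Real.sqrt (2 * π * Δ))⁻¹ * Real.exp K * Real.exp (-β * (g - m) ^ 2) := by
            rw [hexparg g, Real.exp_add]; ring
    have hfmeas : Measurable (fun g : ℝ => ENNReal.ofReal
        (Real.exp (p * (((c + θ / 2 * g) ^ 2 + e) / D)))) := by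
      apply ENNReal.measurable_ofReal.comp
      apply Real.measurable_exp.comp
      fun_prop
    calc
      ∫⁻ g, ENNReal.ofReal (Real.exp (p * (((c + θ / 2 * g) ^ 2 + e) / D)))
            ∂(gaussianReal 0 Δ.toNNReal)
          = ∫⁻ g, gaussianPDF 0 Δ.toNNReal g * ENNReal.ofReal
              (Real.exp (p * (((c + θ / 2 * g) ^ 2 + e) / D))) := by
            rw [gaussianReal_of_var_ne_zero 0 hV0,
              lintegral_withDensity_eq_lintegral_mul volume (measurable_gaussianPDF _ _) hfmeas]
            rfl
      _ = ∫⁻ g, ENNReal.ofReal ((Real.sqrt (2 * π * Δ))⁻¹ * Real.exp K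
              * Real.exp (-β * (g - m) ^ 2)) := by
            congr 1; funext g
            rw [gaussianPDF, ← ENNReal.ofReal_mul (gaussianPDFReal_nonneg _ _ _), hpoint g]
      _ = ENNReal.ofReal (∫ g, (Real.sqrt (2 * π * Δ))⁻¹ * Real.exp K
              * Real.exp (-β * (g - m) ^ 2)) := by
            rw [← ofReal_integral_eq_lintegral_ofReal]
            · exact (((integrable_exp_neg_mul_sq hβ).comp_sub_right m).const_mul _)
            · exact Filter.Eventually.of_forall (fun g => by positivity)
      _ = ENNReal.ofReal ((Real.sqrt (2 * π * Δ))⁻¹ * Real.exp K * Real.sqrt (π / β)) := by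
            rw [integral_const_mul,
              MeasureTheory.integral_sub_right_eq_self (fun y => Real.exp (-β * y ^ 2)) m,
              integral_gaussian]
      _ ≤ ENNReal.ofReal (Real.exp (κ * lam * p * Δ) * Real.exp (p * v)) := by
            apply ENNReal.ofReal_le_ofReal
            have hA : (Real.sqrt (2 * π * Δ))⁻¹ * Real.sqrt (π / β)
                = Real.sqrt (1 / (1 - x)) := by
              rw [← Real.sqrt_inv, ← Real.sqrt_mul (by positivity)]
              congr 1
              rw [← h2Δβ]
              field_simp
            have hxD : x / (1 - x) ≤ x * D := by
              rw [div_le_iff₀ h1x]; nlinarith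
            have h5 : 1 / (1 - x) ≤ Real.exp (x * D) := by
              have h5a : 1 / (1 - x) = 1 + x / (1 - x) := by field_simp; ring
              rw [h5a]
              have hexp := Real.add_one_le_exp (x * D)
              nlinarith [hxD, hexp]
            have h6 : Real.sqrt (1 / (1 - x)) ≤ Real.exp (x * D / 2) := by
              rw [Real.exp_half]
              exact Real.sqrt_le_sqrt h5
            have hΔβ : 1 ≤ 2 * Δ * β * D := by
              calc (1:ℝ) ≤ D * (1 - x) := hD1x
                _ = 2 * Δ * β * D := by rw [h2Δβ]; ring
            have hcoeff : p / D + p ^ 2 * (θ / 2) ^ 2 / (D ^ 2 * β) ≤ p := by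
              have h8 : p ^ 2 * (θ / 2) ^ 2 / (D ^ 2 * β) ≤ p * κ * Δ / D := by
                rw [div_le_div_iff₀ (by positivity) hD]
                nlinarith [mul_le_mul_of_nonneg_left hΔβ
                    (by positivity : (0:ℝ) ≤ p * κ * D / 2),
                  mul_le_mul_of_nonneg_left hpθ (by positivity : (0:ℝ) ≤ p * D / 4)]
              have h9 : p / D + p * κ * Δ / D = p := by
                rw [← add_div, hDdef]
                field_simp
              linarith
            have h7 : δ + γ ^ 2 / (4 * β) ≤ p * e / D + p * v := by
              have h7a : δ + γ ^ 2 / (4 * β)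
                  = v * (p / D + p ^ 2 * (θ / 2) ^ 2 / (D ^ 2 * β)) + p * e / D := by
                rw [hδ, hγ, ← hc2]; field_simp [hD.ne', hβ.ne']; ring
              rw [h7a]
              have : v * (p / D + p ^ 2 * (θ / 2) ^ 2 / (D ^ 2 * β)) ≤ v * p :=
                mul_le_mul_of_nonneg_left hcoeff hv
              nlinarith
            have hKle : K ≤ p * e / D + p * v := by rw [hK]; linarith
            have hxD2 : x * D = p * θ ^ 2 * Δ / 2 := by
              rw [hxdef]; field_simp; try ring
            have hfinal : x * D / 2 + p * e / D ≤ κ * lam * p * Δ := by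
              rw [hxD2, he]
              rw [div_add_div _ _ (by norm_num : (2:ℝ) ≠ 0) hD.ne',
                div_le_iff₀ (by positivity)]
              rw [hDdef]
              nlinarith [mul_nonneg (mul_nonneg hp.le hΔ0.le) (sub_nonneg.mpr hfell),
                mul_nonneg hκ.le hΔ0.le]
            calc (Real.sqrt (2 * π * Δ))⁻¹ * Real.exp K * Real.sqrt (π / β)
                = ((Real.sqrt (2 * π * Δ))⁻¹ * Real.sqrt (π / β)) * Real.exp K := by ring
              _ = Real.sqrt (1 / (1 - x)) * Real.exp K := by rw [hA]
              _ ≤ Real.exp (x * D / 2) * Real.exp (p * e / D + p * v) :=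
                  mul_le_mul h6 (Real.exp_le_exp.mpr hKle) (Real.exp_pos K).le
                    (Real.exp_pos _).le
              _ = Real.exp (x * D / 2 + (p * e / D + p * v)) := (Real.exp_add _ _).symm
              _ ≤ Real.exp (κ * lam * p * Δ) * Real.exp (p * v) := by
                  rw [← Real.exp_add]
                  exact Real.exp_le_exp.mpr (by linarith)

lemma step_bound {P : Measure Ω} [IsProbabilityMeasure P]
    {κ lam θ p : ℝ} (hκ : 0 < κ) (hθ : 0 < θ)
    (hfell : θ ^ 2 / 4 ≤ κ * lam) (hp : 0 < p) (hpκ : p ≤ 2 * κ / θ ^ 2)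
    {X G : Ω → ℝ} (hXm : Measurable X) (hGm : Measurable G)
    (hX0 : ∀ ω, 0 ≤ X ω) {Δ : ℝ} (hΔ : 0 ≤ Δ)
    (hlaw : Measure.map G P = gaussianReal 0 Δ.toNNReal)
    (hind : IndepFun X G P) :
    ∫⁻ ω, ENNReal.ofReal (Real.exp (p * (((Real.sqrt (X ω) + θ / 2 * G ω) ^ 2
        + (κ * lam - θ ^ 2 / 4) * Δ) / (1 + κ * Δ)))) ∂P
      ≤ ENNReal.ofReal (Real.exp (κ * lam * p * Δ))
          * ∫⁻ ω, ENNReal.ofReal (Real.exp (p * X ω)) ∂P := by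
  have hfm : Measurable (fun q : ℝ × ℝ => ENNReal.ofReal (Real.exp
      (p * (((Real.sqrt q.1 + θ / 2 * q.2) ^ 2
        + (κ * lam - θ ^ 2 / 4) * Δ) / (1 + κ * Δ))))) := by
    apply ENNReal.measurable_ofReal.comp
    apply Real.measurable_exp.comp
    apply Measurable.const_mul
    apply Measurable.div_const
    apply Measurable.add_const
    exact ((Real.continuous_sqrt.measurable.comp measurable_fst).add
      (measurable_snd.const_mul _)).pow_const 2
  have hm1 : Measurable fun x : ℝ => ENNReal.ofReal (Real.exp (p * x)) := by fun_prop
  haveI : IsProbabilityMeasure (Measure.map X P) :=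
    Measure.isProbabilityMeasure_map hXm.aemeasurable
  haveI : IsProbabilityMeasure (Measure.map G P) :=
    Measure.isProbabilityMeasure_map hGm.aemeasurable
  have hprod : Measure.map (fun ω => (X ω, G ω)) P
      = (Measure.map X P).prod (Measure.map G P) :=
    (indepFun_iff_map_prod_eq_prod_map_map hXm.aemeasurable hGm.aemeasurable).mp hind
  calc
    ∫⁻ ω, ENNReal.ofReal (Real.exp (p * (((Real.sqrt (X ω) + θ / 2 * G ω) ^ 2
        + (κ * lam - θ ^ 2 / 4) * Δ) / (1 + κ * Δ)))) ∂P
        = ∫⁻ q, ENNReal.ofReal (Real.exp (p * (((Real.sqrt q.1 + θ / 2 * q.2) ^ 2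
            + (κ * lam - θ ^ 2 / 4) * Δ) / (1 + κ * Δ))))
            ∂(Measure.map (fun ω => (X ω, G ω)) P) := by
          rw [lintegral_map hfm (hXm.prodMk hGm)]
    _ = ∫⁻ x, ∫⁻ y, ENNReal.ofReal (Real.exp (p * (((Real.sqrt x + θ / 2 * y) ^ 2
            + (κ * lam - θ ^ 2 / 4) * Δ) / (1 + κ * Δ))))
            ∂(Measure.map G P) ∂(Measure.map X P) := by
          rw [hprod, lintegral_prod _ hfm.aemeasurable]
    _ ≤ ∫⁻ x, ENNReal.ofReal (Real.exp (κ * lam * p * Δ) * Real.exp (p * x))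
            ∂(Measure.map X P) := by
          apply lintegral_mono_ae
          have hae : ∀ᵐ x ∂(Measure.map X P), 0 ≤ x := by
            rw [ae_map_iff hXm.aemeasurable measurableSet_Ici]
            exact Filter.Eventually.of_forall hX0
          filter_upwards [hae] with x hx
          rw [hlaw]
          exact gauss_core hκ hθ hfell hp hpκ hx hΔ
    _ = ∫⁻ x, ENNReal.ofReal (Real.exp (κ * lam * p * Δ))
            * ENNReal.ofReal (Real.exp (p * x)) ∂(Measure.map X P) := by
          congr 1; funext x
          rw [ENNReal.ofReal_mul (Real.exp_pos _).le]
    _ = ENNReal.ofReal (Real.exp (κ * lam * p * Δ))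
          * ∫⁻ x, ENNReal.ofReal (Real.exp (p * x)) ∂(Measure.map X P) :=
        lintegral_const_mul _ hm1
    _ = ENNReal.ofReal (Real.exp (κ * lam * p * Δ))
          * ∫⁻ ω, ENNReal.ofReal (Real.exp (p * X ω)) ∂P := by
        rw [lintegral_map hm1 hXm]

lemma milstein_lintegral_bound {P : Measure Ω} [IsProbabilityMeasure P]
    {W : ℝ → Ω → ℝ} (hW : IsBrownian P W)
    {κ lam θ v₀ p : ℝ} (hκ : 0 < κ) (hθ : 0 < θ)
    (hfell : θ ^ 2 / 4 ≤ κ * lam) (hv₀ : 0 ≤ v₀)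
    (hp : 0 < p) (hpκ : p ≤ 2 * κ / θ ^ 2)
    {t : ℕ → ℝ} {N : ℕ} {T : ℝ} (hpart : IsPartition t N T) :
    ∀ n, n ≤ N →
      ∫⁻ ω, ENNReal.ofReal (Real.exp (p * milstein κ lam θ v₀ t W n ω)) ∂P
        ≤ ENNReal.ofReal (Real.exp (p * v₀) * Real.exp (κ * lam * p * t n)) := by
  intro n
  induction n with
  | zero =>
    intro _
    rw [hpart.zero]
    simp only [milstein, mul_zero, Real.exp_zero, mul_one, lintegral_const,
      measure_univ, mul_one]
    exact le_refl _
  | succ m ih =>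
    intro hm
    have hmN : m ≤ N := by omega
    have hts : t m ≤ t (m + 1) := (hpart.lt m (by omega)).le
    have hΔ : (0:ℝ) ≤ t (m + 1) - t m := sub_nonneg.mpr hts
    have hXm := milstein_measurable hW.meas κ lam θ v₀ t m
    have hGm : Measurable (fun ω => W (t (m + 1)) ω - W (t m) ω) :=
      (hW.meas _).sub (hW.meas _)
    have hX0 := milstein_nonneg hpart hκ hfell hv₀ W m hmN
    have hlaw := hW.gauss (t m) (t (m + 1)) (hpart.nonneg' hmN) hts
    have hind := milstein_indepFun hW hpart κ lam θ v₀ hmN hts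
    have hrw : ∀ ω, milstein κ lam θ v₀ t W (m + 1) ω
        = ((Real.sqrt (milstein κ lam θ v₀ t W m ω)
              + θ / 2 * (W (t (m + 1)) ω - W (t m) ω)) ^ 2
            + (κ * lam - θ ^ 2 / 4) * (t (m + 1) - t m))
          / (1 + κ * (t (m + 1) - t m)) := by
      intro ω
      simp only [milstein]
      rw [one_div, inv_mul_eq_div]
    have hstep := step_bound (P := P) hκ hθ hfell hp hpκ hXm hGm hX0 hΔ hlaw hind
    calc
      ∫⁻ ω, ENNReal.ofReal (Real.exp (p * milstein κ lam θ v₀ t W (m + 1) ω)) ∂P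
          = ∫⁻ ω, ENNReal.ofReal (Real.exp (p
              * (((Real.sqrt (milstein κ lam θ v₀ t W m ω)
                    + θ / 2 * (W (t (m + 1)) ω - W (t m) ω)) ^ 2
                  + (κ * lam - θ ^ 2 / 4) * (t (m + 1) - t m))
                / (1 + κ * (t (m + 1) - t m))))) ∂P := by
            congr 1; funext ω; rw [hrw ω]
      _ ≤ ENNReal.ofReal (Real.exp (κ * lam * p * (t (m + 1) - t m)))
            * ∫⁻ ω, ENNReal.ofReal (Real.exp (p * milstein κ lam θ v₀ t W m ω)) ∂P :=
          hstep
      _ ≤ ENNReal.ofReal (Real.exp (κ * lam * p * (t (m + 1) - t m)))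
            * ENNReal.ofReal (Real.exp (p * v₀) * Real.exp (κ * lam * p * t m)) :=
          mul_le_mul_right (ih hmN) _
      _ = ENNReal.ofReal (Real.exp (p * v₀) * Real.exp (κ * lam * p * t (m + 1))) := by
          rw [← ENNReal.ofReal_mul (Real.exp_pos _).le]
          congr 1
          rw [← Real.exp_add, ← Real.exp_add, ← Real.exp_add]
          exact congrArg Real.exp (by ring)

/-- under `ν = 2κλ/θ² > 1/2`, for `0 < p ≤ 2κ/θ²` and every partition, the
interpolated drift-implicit Milstein scheme satisfies
`sup_{t ∈ [0,T]} E[exp(p v̂_t)] ≤ exp(p v₀) exp(κλpT)`, a bound independent of the partition. -/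
theorem statement3
    {Ω : Type*} [MeasurableSpace Ω] (P : Measure Ω) [IsProbabilityMeasure P]
    (W : ℝ → Ω → ℝ) (hW : IsBrownian P W)
    (κ lam θ v₀ T : ℝ)
    (hκ : 0 < κ) (hlam : 0 < lam) (hθ : 0 < θ) (hv₀ : 0 < v₀) (hT : 0 < T)
    (hFeller : 1 / 2 < 2 * κ * lam / θ ^ 2)
    (p : ℝ) (hp : 0 < p) (hpκ : p ≤ 2 * κ / θ ^ 2) :
    ∀ (N : ℕ) (t : ℕ → ℝ), IsPartition t N T → ∀ s ∈ Set.Icc (0 : ℝ) T,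
      ∫⁻ ω, ENNReal.ofReal (Real.exp (p * hatV κ lam θ v₀ t N W s ω)) ∂P
        ≤ ENNReal.ofReal (Real.exp (p * v₀) * Real.exp (κ * lam * p * T)) := by
  intro N t hpart s hs
  have hfell : θ ^ 2 / 4 ≤ κ * lam := by
    rw [lt_div_iff₀ (by positivity : (0:ℝ) < θ ^ 2)] at hFeller
    nlinarith
  set n := nIdx t N s with hn
  have hnN : n ≤ N := by
    rw [hn]; unfold nIdx; exact Nat.findGreatest_le (P := fun k => t k ≤ s) N
  have hts : t n ≤ s := by
    have h0 : t 0 ≤ s := by rw [hpart.zero]; exact hs.1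
    rw [hn]; unfold nIdx
    exact Nat.findGreatest_spec (P := fun k => t k ≤ s) (Nat.zero_le N) h0
  have hΔ : (0:ℝ) ≤ s - t n := sub_nonneg.mpr hts
  have heta : eta t N s = t n := rfl
  have hXm := milstein_measurable hW.meas κ lam θ v₀ t n
  have hGm : Measurable (fun ω => W s ω - W (t n) ω) := (hW.meas _).sub (hW.meas _)
  have hX0 := milstein_nonneg hpart hκ hfell hv₀.le W n hnN
  have hlaw := hW.gauss (t n) s (hpart.nonneg' hnN) hts
  have hind := milstein_indepFun hW hpart κ lam θ v₀ hnN hts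
  have hrw : ∀ ω, hatV κ lam θ v₀ t N W s ω
      = ((Real.sqrt (milstein κ lam θ v₀ t W n ω) + θ / 2 * (W s ω - W (t n) ω)) ^ 2
          + (κ * lam - θ ^ 2 / 4) * (s - t n)) / (1 + κ * (s - t n)) := by
    intro ω
    have hXnn := hX0 ω
    rw [hatV, tildeV, heta]
    congr 1
    linear_combination (-1 : ℝ) * Real.sq_sqrt hXnn
  have hstep := step_bound (P := P) hκ hθ hfell hp hpκ hXm hGm hX0 hΔ hlaw hind
  have hbound := milstein_lintegral_bound hW hκ hθ hfell hv₀.le hp hpκ hpart n hnN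
  calc
    ∫⁻ ω, ENNReal.ofReal (Real.exp (p * hatV κ lam θ v₀ t N W s ω)) ∂P
        = ∫⁻ ω, ENNReal.ofReal (Real.exp (p
            * (((Real.sqrt (milstein κ lam θ v₀ t W n ω)
                  + θ / 2 * (W s ω - W (t n) ω)) ^ 2
                + (κ * lam - θ ^ 2 / 4) * (s - t n)) / (1 + κ * (s - t n))))) ∂P := by
          congr 1; funext ω; rw [hrw ω]
    _ ≤ ENNReal.ofReal (Real.exp (κ * lam * p * (s - t n)))
          * ∫⁻ ω, ENNReal.ofReal (Real.exp (p * milstein κ lam θ v₀ t W n ω)) ∂P := hstep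
    _ ≤ ENNReal.ofReal (Real.exp (κ * lam * p * (s - t n)))
          * ENNReal.ofReal (Real.exp (p * v₀) * Real.exp (κ * lam * p * t n)) :=
        mul_le_mul_right hbound _
    _ ≤ ENNReal.ofReal (Real.exp (p * v₀) * Real.exp (κ * lam * p * T)) := by
        rw [← ENNReal.ofReal_mul (Real.exp_pos _).le]
        apply ENNReal.ofReal_le_ofReal
        rw [← Real.exp_add, ← Real.exp_add, ← Real.exp_add]
        apply Real.exp_le_exp.mpr
        have hsT : s ≤ T := hs.2
        nlinarith [mul_pos (mul_pos hκ hlam) hp]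

end
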